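/- Let E be a real normed space with continuous dual E*, K ⊆ E a nonempty convex set, r ∈ [2, ∞), s defined by 1/r + 1/s = 1, L₀ > 0, η ≥ 0, D > 0, and T ≥ 1 an integer. Let Ψ : K → ℝ be nonnegative with Ψ(x) ≤ D for all x ∈ K, and let DΨ : K → E* satisfy the r-uniform convexity inequality Ψ(y) ≥ Ψ(x) + DΨ(x)(y − x) + (1/r)‖y − x‖^r for all x, y ∈ K; define the prox-function V_x(y) = Ψ(y) − Ψ(x) − DΨ(x)(y − x). Let F : K → ℝ be convex on K, and ∇F : K → E* satisfy F(u) ≥ F(x) + ∇F(x)(u − x) for all x, u ∈ K. Let g̃ : K → E* satisfy, for all x, y, u ∈ K, |(g̃(x) − ∇F(x))(y − u)| ≤ η and ‖g̃(x)‖ ≤ L₀. Set α = (1/L₀)·(rD/T)^{1 − 1/r}. Let x⁰ ∈ K satisfy DΨ(x⁰)(u − x⁰) ≥ 0 for all u ∈ K, and for t = 0, 1, …, T−1 let x^{t+1} ∈ K satisfy the prox-step optimality condition ( α·g̃(x^t) + DΨ(x^{t+1}) − DΨ(x^t) )(u − x^{t+1}) ≥ 0 for all u ∈ K. Then the average x̄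 = (1/T)·Σ_{t=0}^{T−1} x^t satisfies, for every u ∈ K: F(x̄) − F(u) ≤ L₀·(rD/T)^{1/r} + η. -/

import Mathlib

/-- Guarantee of the inexact mirror-descent method with a proximal setup based on an
`r`-uniformly convex function. -/
theorem stmt_9 {E : Type*} [NormedAddCommGroup E] [NormedSpace ℝ E]
    (K : Set E) (hKne : K.Nonempty) (hK : Convex ℝ K)
    (r s L₀ η D : ℝ) (hr : 2 ≤ r) (hrs : 1 / r + 1 / s = 1)
    (hL₀ : 0 < L₀) (hη : 0 ≤ η) (hD : 0 < D) (T : ℕ) (hT : 1 ≤ T)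
    (Ψ : E → ℝ) (hΨ : ∀ x ∈ K, 0 ≤ Ψ x ∧ Ψ x ≤ D)
    (DΨ : E → (E →L[ℝ] ℝ))
    (hunif : ∀ x ∈ K, ∀ y ∈ K, Ψ y ≥ Ψ x + DΨ x (y - x) + (1 / r) * ‖y - x‖ ^ r)
    (F : E → ℝ) (hF : ConvexOn ℝ K F) (gradF : E → (E →L[ℝ] ℝ))
    (hsub : ∀ x ∈ K, ∀ u ∈ K, F u ≥ F x + gradF x (u - x))
    (gtil : E → (E →L[ℝ] ℝ))
    (happrox : ∀ x ∈ K, ∀ y ∈ K, ∀ u ∈ K, |(gtil x - gradF x) (y - u)| ≤ η)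
    (hbound : ∀ x ∈ K, ‖gtil x‖ ≤ L₀)
    (α : ℝ) (hα : α = (1 / L₀) * (r * D / T) ^ (1 - 1 / r))
    (x : ℕ → E) (hx0K : x 0 ∈ K)
    (hx0 : ∀ u ∈ K, 0 ≤ DΨ (x 0) (u - x 0))
    (hstep : ∀ t < T, x (t + 1) ∈ K ∧
      ∀ u ∈ K, 0 ≤ (α • gtil (x t) + (DΨ (x (t + 1)) - DΨ (x t))) (u - x (t + 1))) :
    ∀ u ∈ K,
      F ((1 / (T : ℝ)) • ∑ t ∈ Finset.range T, x t) - F u ≤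
        L₀ * (r * D / T) ^ (1 / r) + η := by
  intro u hu
  have hr0 : (0:ℝ) < r := by linarith
  have hr1 : (1:ℝ) < r := by linarith
  have hT0 : (0:ℝ) < (T:ℝ) := by
    have : (1:ℝ) ≤ (T:ℝ) := by exact_mod_cast hT
    linarith
  have hir : 0 < 1/r := by positivity
  have hir1 : 1/r < 1 := by rw [div_lt_one hr0]; exact hr1
  have hs1 : 1/s = 1 - 1/r := by linarith
  have h1s : 0 < 1/s := by rw [hs1]; linarith
  have hspos : 0 < s := one_div_pos.mp h1s
  have hsne : s ≠ 0 := ne_of_gt hspos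
  set A := r * D / (T:ℝ) with hAdef
  have hA : 0 < A := by positivity
  have hconj : r.HolderConjugate s := by
    constructor
    · rw [inv_one, ← one_div, ← one_div]; exact hrs
    · exact hr0
    · exact hspos
  have hαval : α = A ^ (1/s) / L₀ := by
    rw [hα, ← hs1]; ring
  have hαpos : 0 < α := by rw [hαval]; positivity
  have hαL : α * L₀ = A ^ (1/s) := by
    rw [hαval]; field_simp
  have hALs : (α * L₀) ^ s = A := by
    rw [hαL, ← Real.rpow_mul hA.le, one_div_mul_cancel hsne, Real.rpow_one]
  -- membership of iterates
  have hmem : ∀ t, t ≤ T → x t ∈ K := by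
    intro t
    induction t with
    | zero => intro _; exact hx0K
    | succ n ih => intro h; exact (hstep n (by omega)).1
  -- Bregman distance to u
  set B : ℕ → ℝ := fun t => Ψ u - Ψ (x t) - DΨ (x t) (u - x t) with hB
  have hBT : 0 ≤ B T := by
    have h1 := hunif (x T) (hmem T le_rfl) u hu
    have hnn : 0 ≤ (1/r) * ‖u - x T‖ ^ r := by positivity
    simp only [hB]; linarith
  have hB0' : True := trivial
  have hB0 : B 0 ≤ D := by
    have h1 := (hΨ (x 0) hx0K).1
    have h2 := (hΨ u hu).2
    have h3 := hx0 u hu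
    simp only [hB]; linarith
  clear_value B
  clear_value A
  -- per-step bound
  have key : ∀ t < T, α * (F (x t) - F u) ≤ α * η + A/s + (B t - B (t+1)) := by
    intro t ht
    have hxt : x t ∈ K := hmem t ht.le
    have hxt1 : x (t+1) ∈ K := (hstep t ht).1
    -- subgradient inequality
    have h1 : F (x t) - F u ≤ gradF (x t) (x t - u) := by
      have h := hsub (x t) hxt u hu
      have he : gradF (x t) (x t - u) = - gradF (x t) (u - x t) := by
        rw [← map_neg]; congr 1; abel
      rw [he]; linarith
    -- approximate gradient
    have h2 : gradF (x t) (x t - u) ≤ gtil (x t) (x t - u) + η := by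
      have h := happrox (x t) hxt (x t) hxt u hu
      rw [ContinuousLinearMap.sub_apply] at h
      have h' := (abs_le.mp h).1
      linarith
    -- split
    have hsplit : gtil (x t) (x t - u)
        = gtil (x t) (x t - x (t+1)) + gtil (x t) (x (t+1) - u) := by
      rw [← map_add]; congr 1; abel
    -- optimality / three-point
    have h3 : α * gtil (x t) (x (t+1) - u)
        ≤ (B t - B (t+1)) - (Ψ (x (t+1)) - Ψ (x t) - DΨ (x t) (x (t+1) - x t)) := by
      have hopt := (hstep t ht).2 u hu
      simp only [ContinuousLinearMap.add_apply, ContinuousLinearMap.sub_apply,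
        ContinuousLinearMap.coe_smul', Pi.smul_apply, smul_eq_mul] at hopt
      simp only [hB, map_sub] at hopt ⊢
      linarith [hopt]
    -- uniform convexity
    have h4 : (1/r) * ‖x (t+1) - x t‖ ^ r
        ≤ Ψ (x (t+1)) - Ψ (x t) - DΨ (x t) (x (t+1) - x t) := by
      have h := hunif (x t) hxt (x (t+1)) hxt1
      linarith
    -- Young step
    have h5 : α * gtil (x t) (x t - x (t+1))
        ≤ (1/r) * ‖x (t+1) - x t‖ ^ r + A/s := by
      have hop : gtil (x t) (x t - x (t+1)) ≤ ‖gtil (x t)‖ * ‖x t - x (t+1)‖ := by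
        have := (gtil (x t)).le_opNorm (x t - x (t+1))
        rw [Real.norm_eq_abs] at this
        exact (le_abs_self _).trans this
      have hnb : gtil (x t) (x t - x (t+1)) ≤ L₀ * ‖x t - x (t+1)‖ :=
        hop.trans (mul_le_mul_of_nonneg_right (hbound _ hxt) (norm_nonneg _))
      have hαnb : α * gtil (x t) (x t - x (t+1)) ≤ ‖x (t+1) - x t‖ * (α * L₀) := by
        rw [norm_sub_rev]
        calc α * gtil (x t) (x t - x (t+1)) ≤ α * (L₀ * ‖x t - x (t+1)‖) :=
              mul_le_mul_of_nonneg_left hnb hαpos.le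
          _ = ‖x t - x (t+1)‖ * (α * L₀) := by ring
      have hyoung := Real.young_inequality_of_nonneg (norm_nonneg (x (t+1) - x t))
        (by positivity : (0:ℝ) ≤ α * L₀) hconj
      rw [hALs] at hyoung
      calc α * gtil (x t) (x t - x (t+1)) ≤ ‖x (t+1) - x t‖ * (α * L₀) := hαnb
        _ ≤ ‖x (t+1) - x t‖ ^ r / r + A / s := hyoung
        _ = (1/r) * ‖x (t+1) - x t‖ ^ r + A/s := by ring
    have hc : F (x t) - F u ≤ gtil (x t) (x t - x (t+1)) + gtil (x t) (x (t+1) - u) + η := by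
      rw [← hsplit]; linarith
    have hc' := mul_le_mul_of_nonneg_left hc hαpos.le
    rw [mul_add, mul_add] at hc'
    linarith [hc', h3, h4, h5]
  -- sum the per-step bounds
  have hsumT : α * (∑ t ∈ Finset.range T, (F (x t) - F u)) ≤ (T:ℝ) * (α*η + A/s) + D := by
    have h1 : ∑ t ∈ Finset.range T, (α * (F (x t) - F u))
        ≤ ∑ t ∈ Finset.range T, (α*η + A/s + (B t - B (t+1))) :=
      Finset.sum_le_sum (fun t ht => key t (Finset.mem_range.mp ht))
    rw [← Finset.mul_sum] at h1
    have h2 : ∑ t ∈ Finset.range T, (α*η + A/s + (B t - B (t+1)))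
        = (T:ℝ) * (α*η + A/s) + (B 0 - B T) := by
      rw [Finset.sum_add_distrib, Finset.sum_const, Finset.card_range,
        Finset.sum_range_sub', nsmul_eq_mul]
    rw [h2] at h1
    linarith
  -- Jensen
  have hJ : F ((1/(T:ℝ)) • ∑ t ∈ Finset.range T, x t)
      ≤ ∑ t ∈ Finset.range T, (1/(T:ℝ)) * F (x t) := by
    have hw : ∑ _t ∈ Finset.range T, (1/(T:ℝ)) = 1 := by
      rw [Finset.sum_const, Finset.card_range, nsmul_eq_mul]
      field_simp
    have := hF.map_sum_le (w := fun _ => 1/(T:ℝ)) (p := x) (t := Finset.range T)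
      (fun i _ => by positivity) hw (fun i hi => hmem i (Finset.mem_range.mp hi).le)
    rw [Finset.smul_sum]
    simpa [smul_eq_mul] using this
  -- combine
  have hsum2 : ∑ t ∈ Finset.range T, (F (x t) - F u)
      = (∑ t ∈ Finset.range T, F (x t)) - (T:ℝ) * F u := by
    rw [Finset.sum_sub_distrib, Finset.sum_const, Finset.card_range, nsmul_eq_mul]
  have hfin : F ((1/(T:ℝ)) • ∑ t ∈ Finset.range T, x t) - F u
      ≤ (1/(T:ℝ)) * ((1/α) * ((T:ℝ) * (α*η + A/s) + D)) := by
    have hS : ∑ t ∈ Finset.range T, (F (x t) - F u)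
        ≤ (1/α) * ((T:ℝ) * (α*η + A/s) + D) := by
      have h := (le_div_iff₀' hαpos).mpr hsumT
      have he : ((T:ℝ) * (α*η + A/s) + D) / α = (1/α) * ((T:ℝ) * (α*η + A/s) + D) := by
        ring
      rw [he] at h; exact h
    have hJ' : F ((1/(T:ℝ)) • ∑ t ∈ Finset.range T, x t) - F u
        ≤ (1/(T:ℝ)) * (∑ t ∈ Finset.range T, (F (x t) - F u)) := by
      rw [hsum2]
      have : ∑ t ∈ Finset.range T, (1/(T:ℝ)) * F (x t)
          = (1/(T:ℝ)) * ∑ t ∈ Finset.range T, F (x t) := by rw [Finset.mul_sum]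
      rw [this] at hJ
      have hTne : (T:ℝ) ≠ 0 := hT0.ne'
      have : (1/(T:ℝ)) * ((∑ t ∈ Finset.range T, F (x t)) - (T:ℝ) * F u)
          = (1/(T:ℝ)) * (∑ t ∈ Finset.range T, F (x t)) - F u := by
        field_simp
      rw [this]
      linarith
    calc F ((1/(T:ℝ)) • ∑ t ∈ Finset.range T, x t) - F u
        ≤ (1/(T:ℝ)) * (∑ t ∈ Finset.range T, (F (x t) - F u)) := hJ'
      _ ≤ (1/(T:ℝ)) * ((1/α) * ((T:ℝ) * (α*η + A/s) + D)) :=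
          mul_le_mul_of_nonneg_left hS (by positivity)
  -- final arithmetic
  have h6 : A / s + D / (T:ℝ) = A := by
    have hAs : A / s = A * (1/s) := by ring
    rw [hAs, hs1, hAdef]
    field_simp
    ring
  have h7 : A / α = L₀ * A ^ (1/r) := by
    have hrr : (1:ℝ) - 1/s = 1/r := by linarith
    have hpow : A / A^(1/s) = A ^ (1/r) := by
      rw [← hrr, Real.rpow_sub hA, Real.rpow_one]
    rw [hαval]
    rw [div_div_eq_mul_div, mul_comm, mul_div_assoc, hpow]
  have heq : (1/(T:ℝ)) * ((1/α) * ((T:ℝ) * (α*η + A/s) + D)) = η + A/α := by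
    have hTne : (T:ℝ) ≠ 0 := hT0.ne'
    have hαne : α ≠ 0 := hαpos.ne'
    have : (1/(T:ℝ)) * ((1/α) * ((T:ℝ) * (α*η + A/s) + D))
        = η + (1/α) * (A/s + D/(T:ℝ)) := by
      field_simp
      ring
    rw [this, h6]
    ring
  rw [heq, h7] at hfin
  linarith [hfin]
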